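/- Fix κ ∈ ℝ and functions q, r: ℝ → ℂ. Suppose γ, g, h are differentiable functions on ℝ satisfying γ' = 2(q h + r g), g' = 2κ g + q(γ + 1), h' = -2κ h + r(γ + 1), and that γ(x), g(x), h(x) all tend to 0 as x → ±∞. Then γ(x) + γ(x)²/2 = 2 g(x) h(x) for every x ∈ ℝ. -/

import Mathlib

open Filter

theorem quadratic_identity_green (κ : ℝ) (q r : ℝ → ℂ) (γ g h : ℝ → ℂ)
    (hγ : ∀ x : ℝ, HasDerivAt γ (2 * (q x * h x + r x * g x)) x)
    (hg : ∀ x : ℝ, HasDerivAt g (2 * (κ : ℂ) * g x + q x * (γ x + 1)) x)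
    (hh : ∀ x : ℝ, HasDerivAt h (-(2 * (κ : ℂ)) * h x + r x * (γ x + 1)) x)
    (hγtop : Tendsto γ atTop (nhds 0)) (hγbot : Tendsto γ atBot (nhds 0))
    (hgtop : Tendsto g atTop (nhds 0)) (hgbot : Tendsto g atBot (nhds 0))
    (hhtop : Tendsto h atTop (nhds 0)) (hhbot : Tendsto h atBot (nhds 0)) :
    ∀ x : ℝ, γ x + γ x ^ 2 / 2 = 2 * g x * h x := by
  set F : ℝ → ℂ := fun x => 2 * g x * h x - γ x * γ x / 2 - γ x with hF
  have hF' : ∀ x : ℝ, HasDerivAt F 0 x := by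
    intro x
    have h1 : HasDerivAt (fun y => 2 * g y * h y)
        ((2 * (2 * (κ : ℂ) * g x + q x * (γ x + 1))) * h x
          + (2 * g x) * (-(2 * (κ : ℂ)) * h x + r x * (γ x + 1))) x :=
      ((hg x).const_mul 2).mul (hh x)
    have h2 := HasDerivAt.div_const ((hγ x).mul (hγ x)) (2 : ℂ)
    have := (h1.sub h2).sub (hγ x)
    convert this using 1
    · rfl
    · rfl
    · ring
  have hconst : ∀ x y : ℝ, F x = F y := by
    have hd : Differentiable ℝ F := fun x => (hF' x).differentiableAt
    intro x y
    exact is_const_of_deriv_eq_zero hd (fun z => (hF' z).deriv) x y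
  have hFtop : Tendsto F atTop (nhds 0) := by
    have : Tendsto F atTop (nhds (2 * 0 * 0 - 0 * 0 / 2 - 0)) :=
      (((hgtop.const_mul 2).mul hhtop).sub ((hγtop.mul hγtop).div_const 2)).sub hγtop
    simpa using this
  intro x
  have hx : F x = 0 := by
    have : Tendsto (fun _ : ℝ => F x) atTop (nhds 0) := by
      have := hFtop.congr (fun y => (hconst y x))
      exact this
    exact tendsto_const_nhds_iff.mp this
  have : 2 * g x * h x - γ x * γ x / 2 - γ x = 0 := hx
  linear_combination -this
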